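/- arXiv:2602.15620 — 3 statements merged into one kernel-verified Lean document; each statement's English description precedes it below -/
import Mathlib

section
/- Let N ≥ 2 and let p ∈ ℝ^N be a probability vector with p_n > 0 for all n. Then the collision probability satisfies ∑_{n=1}^N p_n² ≤ 1 − C_N · H(p)², where H(p) = −∑_{n=1}^N p_n log p_n is the Shannon entropy and C_N = (N − 1) / (N · (log N)²). In particular, equality holds both at the uniform distribution (where ∑ p_n² = 1/N and H(p) = log N) and in the limit of a deterministic distribution. -/
open Real Set Finset

/-- The Shannon entropy (with natural logarithm) of a vector `p : ℝ^N`,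
`H(p) = -∑ n, p n * log (p n)`. -/
noncomputable def shannonEntropy {N : ℕ} (p : Fin N → ℝ) : ℝ :=
  -∑ n, p n * Real.log (p n)

/-- The auxiliary function `f x = x (log x)² / (1 - x)`. -/
noncomputable def auxF (x : ℝ) : ℝ := x * Real.log x ^ 2 / (1 - x)

/-- First derivative of `auxF`. -/
noncomputable def auxF1 (x : ℝ) : ℝ :=
  (Real.log x ^ 2 + 2 * Real.log x * (1 - x)) / (1 - x) ^ 2

/-- Second derivative of `auxF`. -/
noncomputable def auxF2 (x : ℝ) : ℝ :=
  2 * (Real.log x + 1 - x) * (Real.log x - 1 + 1 / x) / (1 - x) ^ 3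

lemma auxF_hasDerivAt {x : ℝ} (hx : x ∈ Ioo (0:ℝ) 1) :
    HasDerivAt auxF (auxF1 x) x := by
  obtain ⟨hx0, hx1⟩ := hx
  have hxne : x ≠ 0 := ne_of_gt hx0
  have h1xne : (1 : ℝ) - x ≠ 0 := by linarith
  have hlog : HasDerivAt Real.log (1 / x) x := by
    simpa [one_div] using Real.hasDerivAt_log hxne
  have hlog2 : HasDerivAt (fun y => Real.log y ^ 2) (2 * Real.log x * (1 / x)) x := by
    simpa [mul_comm] using (hlog.fun_pow 2)
  have hnum : HasDerivAt (fun y => y * Real.log y ^ 2)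
      (1 * Real.log x ^ 2 + x * (2 * Real.log x * (1 / x))) x :=
    (hasDerivAt_id x).mul hlog2
  have hden : HasDerivAt (fun y => (1 : ℝ) - y) (-1) x := by
    simpa using (hasDerivAt_const x (1:ℝ)).fun_sub (hasDerivAt_id x)
  have := hnum.div hden h1xne
  refine this.congr_deriv ?_
  unfold auxF1
  field_simp
  ring

lemma auxF1_hasDerivAt {x : ℝ} (hx : x ∈ Ioo (0:ℝ) 1) :
    HasDerivAt auxF1 (auxF2 x) x := by
  obtain ⟨hx0, hx1⟩ := hx
  have hxne : x ≠ 0 := ne_of_gt hx0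
  have h1xne : (1 : ℝ) - x ≠ 0 := by linarith
  have hlog : HasDerivAt Real.log (1 / x) x := by
    simpa [one_div] using Real.hasDerivAt_log hxne
  have hlog2 : HasDerivAt (fun y => Real.log y ^ 2) (2 * Real.log x * (1 / x)) x := by
    simpa [mul_comm] using (hlog.fun_pow 2)
  have hone : HasDerivAt (fun y => (1 : ℝ) - y) (-1) x := by
    simpa using (hasDerivAt_const x (1:ℝ)).fun_sub (hasDerivAt_id x)
  have hmul : HasDerivAt (fun y => 2 * Real.log y * (1 - y))
      ((2 * (1 / x)) * (1 - x) + (2 * Real.log x) * (-1)) x := by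
    exact ((hlog.const_mul 2).mul hone)
  have hnum : HasDerivAt (fun y => Real.log y ^ 2 + 2 * Real.log y * (1 - y))
      (2 * Real.log x * (1 / x) + ((2 * (1 / x)) * (1 - x) + (2 * Real.log x) * (-1))) x :=
    hlog2.add hmul
  have hden : HasDerivAt (fun y => ((1 : ℝ) - y) ^ 2) (2 * (1 - x) * (-1)) x := by
    have := hone.pow 2
    refine this.congr_deriv ?_
    ring
  have hdenne : ((1 : ℝ) - x) ^ 2 ≠ 0 := pow_ne_zero _ h1xne
  have := hnum.div hden hdenne
  refine this.congr_deriv ?_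
  unfold auxF2
  rw [div_eq_div_iff (by positivity) (by positivity)]
  field_simp
  ring

lemma auxF_concave : ConcaveOn ℝ (Ioo (0:ℝ) 1) auxF := by
  have hint : interior (Ioo (0:ℝ) 1) = Ioo (0:ℝ) 1 := interior_Ioo
  refine concaveOn_of_hasDerivWithinAt2_nonpos (f' := auxF1) (f'' := auxF2) (convex_Ioo (0:ℝ) 1)
    (fun x hx => (auxF_hasDerivAt hx).continuousAt.continuousWithinAt)
    (fun x hx => ?_) (fun x hx => ?_) (fun x hx => ?_)
  · rw [hint] at hx ⊢
    exact (auxF_hasDerivAt hx).hasDerivWithinAt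
  · rw [hint] at hx ⊢
    exact (auxF1_hasDerivAt hx).hasDerivWithinAt
  · rw [hint] at hx
    obtain ⟨hx0, hx1⟩ := hx
    have ha : Real.log x + 1 - x ≤ 0 := by
      have := Real.log_le_sub_one_of_pos hx0
      linarith
    have hb : 0 ≤ Real.log x - 1 + 1 / x := by
      have h := Real.log_le_sub_one_of_pos (one_div_pos.mpr hx0)
      rw [Real.log_div one_ne_zero (ne_of_gt hx0), Real.log_one] at h
      linarith
    have hd : (0:ℝ) < (1 - x) ^ 3 := pow_pos (by linarith) 3
    unfold auxF2
    apply div_nonpos_of_nonpos_of_nonneg _ (le_of_lt hd)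
    have : 2 * (Real.log x + 1 - x) ≤ 0 := by linarith
    exact mul_nonpos_of_nonpos_of_nonneg this hb

/-- For a strictly positive probability vector `p` on `N ≥ 2` symbols, the collision
probability satisfies `∑ n, p n² ≤ 1 - C_N · H(p)²` with `C_N = (N-1)/(N (log N)²)`;
moreover equality holds at the uniform distribution. -/
theorem collision_prob_le_one_sub_CN_mul_entropy_sq
    (N : ℕ) (hN : 2 ≤ N) (p : Fin N → ℝ)
    (hp : ∀ n, 0 < p n) (hsum : ∑ n, p n = 1) :
    ∑ n, (p n) ^ 2
      ≤ 1 - ((N : ℝ) - 1) / ((N : ℝ) * Real.log N ^ 2) * (shannonEntropy p) ^ 2 ∧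
    ((∀ n, p n = 1 / (N : ℝ)) →
      ∑ n, (p n) ^ 2
        = 1 - ((N : ℝ) - 1) / ((N : ℝ) * Real.log N ^ 2) * (shannonEntropy p) ^ 2) := by
  have hN1 : (1:ℝ) < (N:ℝ) := by exact_mod_cast hN.trans_lt' one_lt_two
  have hN0 : (0:ℝ) < (N:ℝ) := by linarith
  have hlogN : 0 < Real.log N := Real.log_pos hN1
  -- each p n < 1
  have hlt1 : ∀ n, p n < 1 := by
    intro n
    obtain ⟨m, hm⟩ := Fintype.exists_ne_of_one_lt_card (by simp; omega) n
    have h1 : p n + ∑ k ∈ univ.erase n, p k = 1 := by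
      rw [Finset.add_sum_erase _ _ (mem_univ n)]; exact hsum
    have h2 : 0 < ∑ k ∈ univ.erase n, p k := by
      refine Finset.sum_pos (fun k _ => hp k) ⟨m, Finset.mem_erase.2 ⟨hm, mem_univ m⟩⟩
    linarith
  have hmem : ∀ n, p n ∈ Ioo (0:ℝ) 1 := fun n => ⟨hp n, hlt1 n⟩
  constructor
  · -- Jensen: ∑ f(p n) ≤ N * f (1/N)
    have hinvN : (0:ℝ) < ((N:ℝ))⁻¹ := by positivity
    have hjensen : ∑ n, ((N:ℝ))⁻¹ • auxF (p n) ≤ auxF (∑ n, ((N:ℝ))⁻¹ • p n) :=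
      auxF_concave.le_map_sum (fun i _ => le_of_lt hinvN)
        (by rw [Finset.sum_const, Finset.card_univ, Fintype.card_fin, nsmul_eq_mul, mul_inv_cancel₀ (ne_of_gt hN0)]) (fun i _ => hmem i)
    have hsum_smul : ∑ n, ((N:ℝ))⁻¹ • p n = ((N:ℝ))⁻¹ := by
      simp only [smul_eq_mul, ← Finset.mul_sum, hsum, mul_one]
    have hfinv : auxF ((N:ℝ))⁻¹ = Real.log N ^ 2 / ((N:ℝ) - 1) := by
      unfold auxF
      rw [Real.log_inv]
      have hinvlt : ((N:ℝ))⁻¹ < 1 := by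
        rw [inv_lt_one_iff₀]; right; exact hN1
      rw [div_eq_div_iff (by linarith) (by linarith)]
      field_simp
    have hjensen' : ∑ n, auxF (p n) ≤ (N:ℝ) * Real.log N ^ 2 / ((N:ℝ) - 1) := by
      have := hjensen
      rw [hsum_smul, hfinv] at this
      simp only [smul_eq_mul, ← Finset.mul_sum] at this
      rw [← mul_le_mul_iff_right₀ hinvN]
      calc ((N:ℝ))⁻¹ * ∑ n, auxF (p n) ≤ Real.log N ^ 2 / ((N:ℝ) - 1) := this
        _ = ((N:ℝ))⁻¹ * ((N:ℝ) * Real.log N ^ 2 / ((N:ℝ) - 1)) := by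
            field_simp
    -- Cauchy–Schwarz
    set H := shannonEntropy p with hH
    have hfnonneg : ∀ n, 0 ≤ auxF (p n) := by
      intro n
      have := hmem n
      unfold auxF
      have h1 : (0:ℝ) < 1 - p n := by linarith [(hmem n).2]
      exact div_nonneg (mul_nonneg (hp n).le (sq_nonneg _)) h1.le
    have hab : ∀ n, Real.sqrt (p n * (1 - p n)) * Real.sqrt (auxF (p n)) =
        p n * (-Real.log (p n)) := by
      intro n
      rw [← Real.sqrt_mul (by nlinarith [(hmem n).1, (hmem n).2] : (0:ℝ) ≤ p n * (1 - p n))]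
      have h1 : (0:ℝ) < 1 - p n := by linarith [(hmem n).2]
      have : p n * (1 - p n) * auxF (p n) = (p n * (-Real.log (p n))) ^ 2 := by
        unfold auxF; field_simp
      rw [this, Real.sqrt_sq]
      have hlogneg : Real.log (p n) < 0 := Real.log_neg (hp n) (hlt1 n)
      nlinarith [hp n]
    have hHsum : H = ∑ n, Real.sqrt (p n * (1 - p n)) * Real.sqrt (auxF (p n)) := by
      rw [hH]
      unfold shannonEntropy
      rw [← Finset.sum_neg_distrib]
      congr 1
      ext n
      rw [hab n]; ring
    have hCS : H ^ 2 ≤ (∑ n, (Real.sqrt (p n * (1 - p n)))^2) * ∑ n, (Real.sqrt (auxF (p n)))^2 := by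
      rw [hHsum]
      exact Finset.sum_mul_sq_le_sq_mul_sq _ _ _
    have hA : ∑ n, (Real.sqrt (p n * (1 - p n)))^2 = 1 - ∑ n, (p n)^2 := by
      have : ∀ n, (Real.sqrt (p n * (1 - p n)))^2 = p n - (p n)^2 := by
        intro n
        rw [Real.sq_sqrt (by nlinarith [(hmem n).1, (hmem n).2] : (0:ℝ) ≤ p n * (1 - p n))]
        ring
      simp_rw [this, Finset.sum_sub_distrib, hsum]
    have hB : ∑ n, (Real.sqrt (auxF (p n)))^2 = ∑ n, auxF (p n) := by
      congr 1; ext n; exact Real.sq_sqrt (hfnonneg n)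
    rw [hA, hB] at hCS
    have hQ : 0 ≤ 1 - ∑ n, (p n)^2 := by
      rw [← hA]; positivity
    have hfinal : H ^ 2 ≤ (1 - ∑ n, (p n)^2) * ((N:ℝ) * Real.log N ^ 2 / ((N:ℝ) - 1)) :=
      hCS.trans (mul_le_mul_of_nonneg_left hjensen' hQ)
    have hNm1 : (0:ℝ) < (N:ℝ) - 1 := by linarith
    have hC : ((N:ℝ) - 1) / ((N:ℝ) * Real.log N ^ 2) * ((N:ℝ) * Real.log N ^ 2 / ((N:ℝ) - 1)) = 1 := by
      rw [div_mul_div_comm, mul_comm, div_self (by positivity)]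
    have hCpos : 0 ≤ ((N:ℝ) - 1) / ((N:ℝ) * Real.log N ^ 2) := by
      apply div_nonneg (by linarith) (by positivity)
    have := mul_le_mul_of_nonneg_left hfinal hCpos
    rw [show ((N:ℝ) - 1) / ((N:ℝ) * Real.log N ^ 2) * ((1 - ∑ n, (p n)^2) * ((N:ℝ) * Real.log N ^ 2 / ((N:ℝ) - 1))) = (1 - ∑ n, (p n)^2) * (((N:ℝ) - 1) / ((N:ℝ) * Real.log N ^ 2) * ((N:ℝ) * Real.log N ^ 2 / ((N:ℝ) - 1))) by ring, hC, mul_one] at this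
    linarith
  · -- equality at uniform
    intro hu
    have hHval : shannonEntropy p = Real.log N := by
      unfold shannonEntropy
      simp only [hu, one_div, Real.log_inv]
      rw [Finset.sum_const, Finset.card_univ, Fintype.card_fin]
      field_simp
      rw [smul_neg, neg_neg, nsmul_eq_mul]
      field_simp
    have hQ : ∑ n, (p n)^2 = ((N:ℝ))⁻¹ := by
      simp only [hu, one_div]
      rw [Finset.sum_const, Finset.card_univ, Fintype.card_fin]
      rw [nsmul_eq_mul]
      field_simp
    rw [hHval, hQ]
    have hlogne : Real.log N ≠ 0 := ne_of_gt hlogN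
    field_simp
    ring
end

section
/- (Policy Gradient Norm, lower bound.) Let N ≥ 1, let a ∈ ℝ^N be a logits vector with softmax distribution p = softmax(a), let k be a fixed target index, and let w ∈ ℝ be a fixed scalar weight. Define J(a) = w · log(softmax(a)_k) and let H(p) = −∑_{n=1}^N p_n log p_n be the Shannon entropy of p. Then the squared Euclidean norm of the gradient of J with respect to a satisfies ‖∇_a J‖² ≥ w² · (1 − 2 p_k + exp(−H(p))). -/
set_option maxHeartbeats 1000000

/-- The softmax distribution induced by a logits vector `a ∈ ℝ^N`
(with the Euclidean structure). -/
noncomputable def softmax {N : ℕ} (a : EuclideanSpace ℝ (Fin N)) : Fin N → ℝ :=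
  fun n => Real.exp (a n) / ∑ m, Real.exp (a m)

/-- The gradient of `a ↦ w * log (softmax a k)` is `n ↦ w * (δ_{nk} - softmax a n)`. -/
lemma grad_eq (N : ℕ) (a : EuclideanSpace ℝ (Fin N)) (k : Fin N) (w : ℝ) :
    HasGradientAt (fun a : EuclideanSpace ℝ (Fin N) => w * Real.log (softmax a k))
      ((EuclideanSpace.equiv (Fin N) ℝ).symm
        (fun n => w * ((if n = k then 1 else 0) - softmax a n))) a := by
  have hS : ∀ x : EuclideanSpace ℝ (Fin N), 0 < ∑ m, Real.exp (x m) := fun x =>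
    Finset.sum_pos (fun m _ => Real.exp_pos _) ⟨k, Finset.mem_univ k⟩
  have hfun : (fun a : EuclideanSpace ℝ (Fin N) => w * Real.log (softmax a k))
      = fun x : EuclideanSpace ℝ (Fin N) =>
        w * (x k - Real.log (∑ m, Real.exp (x m))) := by
    funext x
    rw [softmax, Real.log_div (Real.exp_ne_zero _) (hS x).ne', Real.log_exp]
  rw [hfun, hasGradientAt_iff_hasFDerivAt]
  have hSd : HasFDerivAt (fun x : EuclideanSpace ℝ (Fin N) => ∑ m, Real.exp (x m))
      (∑ m, Real.exp (a m) • (EuclideanSpace.proj m : EuclideanSpace ℝ (Fin N) →L[ℝ] ℝ)) a := by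
    apply HasFDerivAt.fun_sum
    intro m _
    have h := ((EuclideanSpace.proj m : EuclideanSpace ℝ (Fin N) →L[ℝ] ℝ).hasFDerivAt (x := a)).exp
    simpa using h
  have hk : HasFDerivAt (fun x : EuclideanSpace ℝ (Fin N) => x k)
      (EuclideanSpace.proj k : EuclideanSpace ℝ (Fin N) →L[ℝ] ℝ) a := by
    have h := (EuclideanSpace.proj k : EuclideanSpace ℝ (Fin N) →L[ℝ] ℝ).hasFDerivAt (x := a)
    simpa using h
  have hd : HasFDerivAt (fun x : EuclideanSpace ℝ (Fin N) =>
      w * (x k - Real.log (∑ m, Real.exp (x m))))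
      (w • ((EuclideanSpace.proj k : EuclideanSpace ℝ (Fin N) →L[ℝ] ℝ)
        - (∑ m, Real.exp (a m))⁻¹ • ∑ m, Real.exp (a m) • (EuclideanSpace.proj m : EuclideanSpace ℝ (Fin N) →L[ℝ] ℝ))) a :=
    (hk.sub (hSd.log (hS a).ne')).const_mul w
  refine hd.congr_fderiv (Eq.symm ?_)
  ext x
  rw [InnerProductSpace.toDual_apply_apply]
  simp only [ContinuousLinearMap.smul_apply, ContinuousLinearMap.sub_apply,
    ContinuousLinearMap.sum_apply, smul_eq_mul,     PiLp.inner_apply, RCLike.inner_apply, conj_trivial]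
  simp only [softmax]
  have hsum : ∑ n, x n * ((EuclideanSpace.equiv (Fin N) ℝ).symm
      (fun n => w * ((if n = k then 1 else 0) - Real.exp (a n) / ∑ m, Real.exp (a m)))) n
      = ∑ n, (w * ((if n = k then (1:ℝ) else 0) - Real.exp (a n) / ∑ m, Real.exp (a m))) * x n :=
    Finset.sum_congr rfl fun n _ => mul_comm _ _
  rw [hsum]
  have hproj : ∀ n, (EuclideanSpace.proj n : EuclideanSpace ℝ (Fin N) →L[ℝ] ℝ) x = x n :=
    fun n => rfl
  simp only [hproj]
  rw [Finset.sum_congr rfl (fun n _ => by ring :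
    ∀ n ∈ Finset.univ, w * ((if n = k then (1:ℝ) else 0) - Real.exp (a n) / ∑ m, Real.exp (a m)) * x n
      = w * ((if n = k then (1:ℝ) else 0) * x n) - w * ((∑ m, Real.exp (a m))⁻¹ * (Real.exp (a n) * x n)))]
  rw [Finset.sum_sub_distrib, ← Finset.mul_sum, ← Finset.mul_sum, ← Finset.mul_sum]
  simp [ite_mul, Finset.sum_ite_eq', mul_sub]

/-- Policy gradient norm, lower bound: for `J(a) = w · log (softmax a k)` and
`p = softmax a`, `‖∇_a J‖² ≥ w² (1 - 2 p_k + exp (-H(p)))`. -/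
theorem policy_gradient_norm_lower_bound
    (N : ℕ) (hN : 1 ≤ N) (a : EuclideanSpace ℝ (Fin N)) (k : Fin N) (w : ℝ) :
    ‖gradient (fun a : EuclideanSpace ℝ (Fin N) => w * Real.log (softmax a k)) a‖ ^ 2
      ≥ w ^ 2 * (1 - 2 * softmax a k + Real.exp (-(shannonEntropy (softmax a)))) := by
  set p : Fin N → ℝ := softmax a with hp
  have hS : 0 < ∑ m, Real.exp (a m) :=
    Finset.sum_pos (fun m _ => Real.exp_pos _) ⟨k, Finset.mem_univ k⟩
  have hppos : ∀ n, 0 < p n := fun n => div_pos (Real.exp_pos _) hS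
  have hpsum : ∑ n, p n = 1 := by
    simp only [hp, softmax, div_eq_mul_inv, ← Finset.sum_mul]
    exact mul_inv_cancel₀ hS.ne'
  have hgrad := (grad_eq N a k w).gradient
  rw [hgrad]
  have hnorm : ‖((EuclideanSpace.equiv (Fin N) ℝ).symm
      (fun n => w * ((if n = k then 1 else 0) - softmax a n)))‖ ^ 2
      = ∑ n, (w * ((if n = k then (1:ℝ) else 0) - p n)) ^ 2 := by
    rw [EuclideanSpace.norm_eq, Real.sq_sqrt (Finset.sum_nonneg fun n _ => sq_nonneg _)]
    refine Finset.sum_congr rfl fun n _ => ?_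
    rw [show ((EuclideanSpace.equiv (Fin N) ℝ).symm
      (fun n => w * ((if n = k then (1:ℝ) else 0) - softmax a n))) n
      = w * ((if n = k then (1:ℝ) else 0) - p n) from rfl, Real.norm_eq_abs, sq_abs]
  rw [hnorm]
  have hexpand : ∑ n, (w * ((if n = k then (1:ℝ) else 0) - p n)) ^ 2
      = w ^ 2 * (1 - 2 * p k + ∑ n, p n ^ 2) := by
    have : ∀ n ∈ Finset.univ, (w * ((if n = k then (1:ℝ) else 0) - p n)) ^ 2
        = w ^ 2 * (if n = k then (1:ℝ) - 2 * p n else 0) + w ^ 2 * p n ^ 2 := by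
      intro n _
      by_cases h : n = k <;> simp [h] <;> ring
    rw [Finset.sum_congr rfl this, Finset.sum_add_distrib, ← Finset.mul_sum, ← Finset.mul_sum,
      Finset.sum_ite_eq' Finset.univ k (fun i => (1:ℝ) - 2 * p i)]
    simp only [Finset.mem_univ, if_true]
    ring
  rw [hexpand]
  -- Jensen: exp(-H) ≤ ∑ p n ^ 2
  have hjensen : Real.exp (-(shannonEntropy p)) ≤ ∑ n, p n ^ 2 := by
    have hconv : ConvexOn ℝ Set.univ Real.exp := convexOn_exp
    have h := hconv.map_sum_le (t := Finset.univ) (w := p) (p := fun n => Real.log (p n))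
      (fun n _ => (hppos n).le) hpsum (fun n _ => Set.mem_univ _)
    simp only [smul_eq_mul] at h
    have h1 : Real.exp (-(shannonEntropy p)) = Real.exp (∑ n, p n * Real.log (p n)) := by
      rw [shannonEntropy, neg_neg]
    have h2 : ∑ n, p n * Real.exp (Real.log (p n)) = ∑ n, p n ^ 2 := by
      refine Finset.sum_congr rfl fun n _ => ?_
      rw [Real.exp_log (hppos n)]; ring
    rw [h1]
    calc Real.exp (∑ n, p n * Real.log (p n)) ≤ ∑ n, p n * Real.exp (Real.log (p n)) := h
      _ = ∑ n, p n ^ 2 := h2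
  have : w ^ 2 * (1 - 2 * p k + Real.exp (-(shannonEntropy p)))
      ≤ w ^ 2 * (1 - 2 * p k + ∑ n, p n ^ 2) :=
    mul_le_mul_of_nonneg_left (by linarith) (sq_nonneg w)
  exact this
end

section
/- (Policy Gradient Norm Bounds, combined.) Let N ≥ 2, let a ∈ ℝ^N be a logits vector with softmax distribution p = softmax(a), let k be a fixed target index, and let w ∈ ℝ be a fixed scalar weight. Define J(a) = w · log(softmax(a)_k), let H(p) = −∑_{n=1}^N p_n log p_n, and let C_N = (N − 1)/(N (log N)²). Assume the collision-probability bound ∑_{n=1}^N p_n² ≤ 1 − C_N · H(p)². Then w² · (1 − 2 p_k + exp(−H(p))) ≤ ‖∇_a J‖² ≤ w² · (2 − 2 p_k − C_N · H(p)²). -/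
lemma softmax_pos {N : ℕ} (hN : 0 < N) (a : EuclideanSpace ℝ (Fin N)) (n : Fin N) :
    0 < softmax a n := by
  have hS : 0 < ∑ m, Real.exp (a m) :=
    Finset.sum_pos (fun m _ => Real.exp_pos _)
      (by simpa using Finset.univ_nonempty_iff.2 ⟨⟨0, hN⟩⟩)
  exact div_pos (Real.exp_pos _) hS

lemma softmax_sum_one {N : ℕ} (hN : 0 < N) (a : EuclideanSpace ℝ (Fin N)) :
    ∑ n, softmax a n = 1 := by
  have hS : 0 < ∑ m, Real.exp (a m) :=
    Finset.sum_pos (fun m _ => Real.exp_pos _)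
      (by simpa using Finset.univ_nonempty_iff.2 ⟨⟨0, hN⟩⟩)
  simp only [softmax]
  rw [← Finset.sum_div, div_self (ne_of_gt hS)]

lemma sm_grad {N : ℕ} (hN : 0 < N) (a : EuclideanSpace ℝ (Fin N)) (k : Fin N) (w : ℝ) :
    HasGradientAt (fun a : EuclideanSpace ℝ (Fin N) => w * Real.log (softmax a k))
      (WithLp.toLp 2 (fun n => w * ((if n = k then 1 else 0) - softmax a n)) : EuclideanSpace ℝ (Fin N)) a := by
  have hSpos : ∀ b : EuclideanSpace ℝ (Fin N), 0 < ∑ m, Real.exp (b m) := fun b =>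
    Finset.sum_pos (fun m _ => Real.exp_pos _) (by simpa using Finset.univ_nonempty_iff.2 ⟨⟨0, hN⟩⟩)
  have heq : (fun b : EuclideanSpace ℝ (Fin N) => w * Real.log (softmax b k))
      = fun b : EuclideanSpace ℝ (Fin N) => w * (b k - Real.log (∑ m, Real.exp (b m))) := by
    funext b
    rw [softmax, Real.log_div (Real.exp_ne_zero _) (ne_of_gt (hSpos b)), Real.log_exp]
  rw [heq, hasGradientAt_iff_hasFDerivAt]
  have h1 : HasFDerivAt (fun b : EuclideanSpace ℝ (Fin N) => b k)
      (EuclideanSpace.proj k : EuclideanSpace ℝ (Fin N) →L[ℝ] ℝ) a := by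
    simpa using (EuclideanSpace.proj (𝕜 := ℝ) (ι := Fin N) k).hasFDerivAt (x := a)
  have h2 : HasFDerivAt (fun b : EuclideanSpace ℝ (Fin N) => ∑ m, Real.exp (b m))
      (∑ m, Real.exp (a m) • (EuclideanSpace.proj m : EuclideanSpace ℝ (Fin N) →L[ℝ] ℝ)) a := by
    refine HasFDerivAt.fun_sum fun m _ => ?_
    have := (EuclideanSpace.proj (𝕜 := ℝ) (ι := Fin N) m).hasFDerivAt (x := a) |>.exp
    simpa using this
  have h3 := (h2.log (ne_of_gt (hSpos a)))
  have h4 := ((h1.sub h3).const_mul w)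
  convert h4 using 1
  · rfl
  · rfl
  ext v
  simp only [InnerProductSpace.toDual_apply_apply, ContinuousLinearMap.smul_apply,
    ContinuousLinearMap.coe_smul', Pi.smul_apply, ContinuousLinearMap.sub_apply,
    ContinuousLinearMap.coe_sub', ContinuousLinearMap.sum_apply, PiLp.proj_apply,
    smul_eq_mul]
  rw [PiLp.inner_apply]
  simp only [RCLike.inner_apply, conj_trivial, softmax]
  rw [Finset.mul_sum]
  have hvk : w * v k = ∑ x, (if x = k then w * v x else 0) := by
    rw [Finset.sum_ite_eq' Finset.univ k (fun x => w * v x)]; simp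
  rw [mul_sub, Finset.mul_sum, hvk, ← Finset.sum_sub_distrib]
  refine Finset.sum_congr rfl fun x _ => ?_
  by_cases hx : x = k <;> simp [hx, div_eq_inv_mul] <;> ring

/-- Policy gradient norm bounds, combined: for `J(a) = w · log (softmax a k)`,
`p = softmax a` and `C_N = (N-1)/(N (log N)²)`, assuming the collision-probability
bound `∑ n, p n² ≤ 1 - C_N H(p)²`, we have
`w² (1 - 2 p_k + exp (-H(p))) ≤ ‖∇_a J‖² ≤ w² (2 - 2 p_k - C_N H(p)²)`. -/
theorem policy_gradient_norm_bounds
    (N : ℕ) (hN : 2 ≤ N) (a : EuclideanSpace ℝ (Fin N)) (k : Fin N) (w : ℝ)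
    (hcoll : ∑ n, (softmax a n) ^ 2
      ≤ 1 - ((N : ℝ) - 1) / ((N : ℝ) * Real.log N ^ 2)
            * (shannonEntropy (softmax a)) ^ 2) :
    w ^ 2 * (1 - 2 * softmax a k + Real.exp (-(shannonEntropy (softmax a))))
      ≤ ‖gradient (fun a : EuclideanSpace ℝ (Fin N) => w * Real.log (softmax a k)) a‖ ^ 2 ∧
    ‖gradient (fun a : EuclideanSpace ℝ (Fin N) => w * Real.log (softmax a k)) a‖ ^ 2
      ≤ w ^ 2 * (2 - 2 * softmax a k
          - ((N : ℝ) - 1) / ((N : ℝ) * Real.log N ^ 2)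
              * (shannonEntropy (softmax a)) ^ 2) := by
  have hN0 : 0 < N := by omega
  have hpos : ∀ n, 0 < softmax a n := softmax_pos hN0 a
  have hsum1 : ∑ n, softmax a n = 1 := softmax_sum_one hN0 a
  have hgrad := (sm_grad hN0 a k w).gradient
  -- norm squared computation
  have hnorm : ‖gradient (fun a : EuclideanSpace ℝ (Fin N) => w * Real.log (softmax a k)) a‖ ^ 2
      = w ^ 2 * (1 - 2 * softmax a k + ∑ n, softmax a n ^ 2) := by
    rw [hgrad, PiLp.norm_sq_eq_of_L2]
    have : ∀ n, ‖w * ((if n = k then 1 else 0) - softmax a n)‖ ^ 2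
        = w ^ 2 * ((if n = k then 1 else 0) - 2 * ((if n = k then 1 else 0) * softmax a n) + softmax a n ^ 2) := by
      intro n
      rw [Real.norm_eq_abs, sq_abs]
      by_cases hn : n = k <;> simp [hn] <;> ring
    rw [Finset.sum_congr rfl fun n _ => this n]
    rw [← Finset.mul_sum]
    congr 1
    rw [Finset.sum_add_distrib, Finset.sum_sub_distrib, ← Finset.mul_sum]
    have h1 : ∑ n, (if n = k then (1:ℝ) else 0) = 1 := by simp
    have h2 : ∑ n, (if n = k then (1:ℝ) else 0) * softmax a n = softmax a k := by
      simp [ite_mul]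
    rw [h1, h2]
  rw [hnorm]
  -- Jensen: exp(-H) ≤ ∑ softmax a n ^ 2
  have hjensen : Real.exp (-(shannonEntropy (softmax a))) ≤ ∑ n, softmax a n ^ 2 := by
    have hH : -(shannonEntropy (softmax a)) = ∑ n, softmax a n * Real.log (softmax a n) := by
      rw [shannonEntropy]; ring
    rw [hH]
    have := convexOn_exp.map_sum_le (t := Finset.univ) (w := softmax a) (p := fun n => Real.log (softmax a n))
      (fun n _ => (hpos n).le) hsum1 (fun n _ => Set.mem_univ _)
    simp only [smul_eq_mul] at this
    calc Real.exp (∑ n, softmax a n * Real.log (softmax a n)) ≤ ∑ n, softmax a n * Real.exp (Real.log (softmax a n)) := this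
      _ = ∑ n, softmax a n ^ 2 := by
          refine Finset.sum_congr rfl fun n _ => ?_
          rw [Real.exp_log (hpos n)]; ring
  constructor
  · have : 1 - 2 * softmax a k + Real.exp (-(shannonEntropy (softmax a))) ≤ 1 - 2 * softmax a k + ∑ n, softmax a n ^ 2 := by
      linarith
    exact mul_le_mul_of_nonneg_left this (sq_nonneg w)
  · have : 1 - 2 * softmax a k + ∑ n, softmax a n ^ 2
        ≤ 2 - 2 * softmax a k - ((N : ℝ) - 1) / ((N : ℝ) * Real.log N ^ 2) * (shannonEntropy (softmax a)) ^ 2 := by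
      linarith
    exact mul_le_mul_of_nonneg_left this (sq_nonneg w)
end
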